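/- Let F be a field, let a ≥ 2 be an even integer, let N be an odd positive integer, and let ε ∈ F with ε = 1 or ε = −1. Let A₀, …, A_{a−1} be N×N matrices over F and let M be the associated block-cyclic matrix of size aN. Let J be the (aN)×(aN) matrix, with rows and columns indexed by pairs (j, x) with j ∈ ℤ/aℤ and x ∈ {1, …, N}, whose (j, j + a/2) block equals I_N for j = 0, …, a/2 − 1, whose (j, j − a/2) block equals ε·I_N for j = a/2, …, a − 1, and all of whose other blocks are zero. If MᵀJM = J, then every λ ∈ F with λ^a = ε is an eigenvalue of M, i.e., det(λ·I_{aN} − M) = 0. -/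

import Mathlib

/-- The block-cyclic matrix associated to `N × N` matrices `A₀, …, A_{a-1}`:
the `(aN) × (aN)` matrix, with rows and columns indexed by pairs
`(j, x) ∈ (ℤ/aℤ) × {1, …, N}`, whose `(j+1, j)` block is `A j` and all of
whose other blocks vanish. -/
def blockCyclic {R : Type*} [CommRing R] {a N : ℕ} [NeZero a]
    (A : ZMod a → Matrix (Fin N) (Fin N) R) :
    Matrix (ZMod a × Fin N) (ZMod a × Fin N) R :=
  Matrix.of fun p q => if p.1 = q.1 + 1 then A q.1 p.2 q.2 else 0

/-- The Gram matrix `J` of the (anti)symmetric pairing: the `(aN) × (aN)`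
matrix whose `(j, j + a/2)` block is `I_N` for `j = 0, …, a/2 - 1`, whose
`(j, j - a/2)` block is `ε • I_N` for `j = a/2, …, a - 1` (note
`j - a/2 ≡ j + a/2 (mod a)` since `a` is even), and all of whose other blocks
vanish. -/
def formJ {R : Type*} [CommRing R] {a N : ℕ} [NeZero a] (ε : R) :
    Matrix (ZMod a × Fin N) (ZMod a × Fin N) R :=
  Matrix.of fun p q =>
    if q.1 = p.1 + ((a / 2 : ℕ) : ZMod a) ∧ p.2 = q.2 then
      (if p.1.val < a / 2 then 1 else ε)
    else 0

open Matrix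

/-- Partial products `Qmat A k = A_{k-1} ⋯ A_1 A_0` (indices taken mod `a`). -/
def Qmat {R : Type*} [CommRing R] {a N : ℕ} [NeZero a]
    (A : ZMod a → Matrix (Fin N) (Fin N) R) : ℕ → Matrix (Fin N) (Fin N) R
  | 0 => 1
  | k + 1 => A (k : ZMod a) * Qmat A k

/-- An alternating matrix of odd size has zero determinant, in any
characteristic (proved by specializing the generic integral case). -/
lemma alt_det_zero {R : Type*} [CommRing R] {N : ℕ} (hN : Odd N)
    (M : Matrix (Fin N) (Fin N) R) : (M - Mᵀ).det = 0 := by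
  set X : Matrix (Fin N) (Fin N) (MvPolynomial (Fin N × Fin N) ℤ) :=
    Matrix.of fun i j => MvPolynomial.X (i, j) with hX
  have h0 : (X - Xᵀ).det = 0 := by
    have h1 : (X - Xᵀ)ᵀ = -(X - Xᵀ) := by
      rw [transpose_sub, transpose_transpose]; abel
    have h2 := (X - Xᵀ).det_transpose
    rw [h1, det_neg, Fintype.card_fin, hN.neg_one_pow, neg_one_mul] at h2
    have h3 : (2 : MvPolynomial (Fin N × Fin N) ℤ) * (X - Xᵀ).det = 0 := by
      linear_combination -h2
    exact (mul_eq_zero.mp h3).resolve_left two_ne_zero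
  set φ : MvPolynomial (Fin N × Fin N) ℤ →+* R :=
    (MvPolynomial.aeval (R := ℤ) fun p : Fin N × Fin N => M p.1 p.2).toRingHom with hφ
  have hmap : (X - Xᵀ).map φ = M - Mᵀ := by
    ext i j
    simp [hφ, hX, Matrix.map_apply, Matrix.sub_apply, Matrix.transpose_apply]
  calc (M - Mᵀ).det = ((X - Xᵀ).map φ).det := by rw [hmap]
    _ = φ (X - Xᵀ).det := (RingHom.map_det φ _).symm
    _ = 0 := by rw [h0, map_zero]

/-- The block-wise content of the relation `Mᵀ J M = J`. -/
lemma block_rel {F : Type*} [Field F] {a N : ℕ} [NeZero a]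
    (ε : F)
    (A : ZMod a → Matrix (Fin N) (Fin N) F)
    (hJ : (blockCyclic A).transpose * formJ ε * blockCyclic A = formJ ε) :
    ∀ j : ZMod a,
      (if (j+1).val < a/2 then (1:F) else ε) • ((A j)ᵀ * A (j + ((a / 2 : ℕ) : ZMod a))) =
      (if j.val < a/2 then (1:F) else ε) • 1 := by
  intro j
  ext x y
  have h := congrFun (congrFun hJ (j, x)) (j + ((a / 2 : ℕ) : ZMod a), y)
  simp only [Matrix.mul_apply, blockCyclic, formJ, Matrix.transpose_apply, Matrix.of_apply,
    Fintype.sum_prod_type, ite_mul, mul_ite, zero_mul, mul_zero, ite_and,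
    Finset.sum_ite_eq, Finset.sum_ite_eq', Finset.mem_univ, if_true,
    Finset.sum_ite_irrel, Finset.sum_const_zero] at h
  have hiff : ∀ x2 : ZMod a, (j + ((a/2:ℕ):ZMod a) + 1 = x2 + ((a/2:ℕ):ZMod a)) ↔ (x2 = j + 1) :=
    fun x2 => by rw [eq_comm, add_right_comm j, add_left_inj]
  simp only [hiff] at h
  rw [Matrix.smul_apply, Matrix.mul_apply, Matrix.smul_apply, Matrix.one_apply]
  by_cases h1 : (j+1).val < a/2 <;> by_cases h2 : j.val < a/2 <;>
    simp only [h1, h2, if_true, if_false, Finset.sum_ite_eq', Finset.mem_univ,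
      Finset.sum_ite_irrel, Finset.sum_const_zero, mul_one, one_mul, smul_eq_mul,
      Matrix.transpose_apply] at h ⊢
  · exact h
  · rw [h]; by_cases hxy : x = y <;> simp [hxy]
  · rw [← h, Finset.mul_sum]; exact Finset.sum_congr rfl fun _ _ => by ring
  · calc ε * ∑ x_1 : Fin N, A j x_1 x * A (j + ((a/2:ℕ):ZMod a)) x_1 y
        = ∑ x_1 : Fin N, A j x_1 x * ε * A (j + ((a/2:ℕ):ZMod a)) x_1 y := by
          rw [Finset.mul_sum]; exact Finset.sum_congr rfl fun _ _ => by ring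
      _ = if x = y then ε else 0 := h
      _ = ε * if x = y then 1 else 0 := by split <;> ring

/-- **Linear-algebra core of Proposition 4.4 of "Geometric non-vanishing"
(Ulmer).** Let `F` be a field, `a ≥ 2` an even integer, `N` an odd positive
integer, and `ε = ±1` in `F`.  Let `A₀, …, A_{a-1}` be `N × N` matrices over
`F` with associated block-cyclic matrix `M` of size `aN`, and let `J` be the
Gram matrix described above.  If `Mᵀ J M = J`, then every `λ ∈ F` with
`λ^a = ε` is an eigenvalue of `M`, i.e. `det (λ • 1 - M) = 0`. -/
theorem blockCyclic_forced_eigenvalues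
    {F : Type*} [Field F] {a N : ℕ} [NeZero a]
    (ha : 2 ≤ a) (haeven : Even a) (hNpos : 0 < N) (hNodd : Odd N)
    (ε : F) (hε : ε = 1 ∨ ε = -1)
    (A : ZMod a → Matrix (Fin N) (Fin N) F)
    (hJ : (blockCyclic A).transpose * formJ ε * blockCyclic A = formJ ε) :
    ∀ lam : F, lam ^ a = ε →
      (lam • (1 : Matrix (ZMod a × Fin N) (ZMod a × Fin N) F) - blockCyclic A).det = 0 := by
  intro lam hlam
  have hsq : ε * ε = 1 := by rcases hε with rfl | rfl <;> ring
  have hεne : ε ≠ 0 := by rcases hε with rfl | rfl <;> simp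
  have hlamne : lam ≠ 0 := by
    intro h0
    rw [h0, zero_pow (NeZero.ne a)] at hlam
    exact hεne hlam.symm
  have rel := block_rel ε A hJ
  set c : ZMod a → F := fun j => if j.val < a/2 then (1:F) else ε with hc
  have hcsq : ∀ j, c j * c j = 1 := by
    intro j; rw [hc]; simp only; split <;> simp [hsq]
  have hcne : ∀ j, c j ≠ 0 := by
    intro j; rw [hc]; simp only; split
    · exact one_ne_zero
    · exact hεne
  have rel2 : ∀ j : ZMod a, (A j)ᵀ * A (j + ((a/2:ℕ):ZMod a)) = (c (j+1) * c j) • 1 := by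
    intro j
    have h2 := congrArg (fun m => c (j+1) • m) (rel j)
    simp only [smul_smul, show (if (j + 1).val < a / 2 then (1:F) else ε) = c (j+1) from rfl,
      show (if j.val < a / 2 then (1:F) else ε) = c j from rfl, hcsq, one_smul] at h2
    rw [h2]
  -- determinants of the blocks are nonzero
  have hdetA : ∀ j : ZMod a, (A j).det ≠ 0 := by
    intro j
    have h2 := congrArg Matrix.det (rel2 j)
    rw [Matrix.det_mul, Matrix.det_transpose, Matrix.det_smul, Matrix.det_one,
      Fintype.card_fin, mul_one] at h2
    intro h0
    rw [h0, zero_mul] at h2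
    exact pow_ne_zero N (mul_ne_zero (hcne _) (hcne _)) h2.symm
  have hdetQ : ∀ k : ℕ, (Qmat A k).det ≠ 0 := by
    intro k
    induction k with
    | zero => simp [Qmat]
    | succ k ih =>
      rw [Qmat, Matrix.det_mul]
      exact mul_ne_zero (hdetA _) ih
  -- the key identity (Q_{a/2})ᵀ * Q_a = ε • Q_{a/2}
  have ha2 : a/2 + a/2 = a := by obtain ⟨r, hr⟩ := haeven; omega
  have QtQ : ∀ k : ℕ, (Qmat A k)ᵀ * Qmat A (a/2 + k) =
      (∏ i ∈ Finset.range k, (c ((i:ZMod a)+1) * c (i:ZMod a))) • Qmat A (a/2) := by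
    intro k
    induction k with
    | zero => simp [Qmat]
    | succ k ih =>
      have hcast : ((a/2 + k : ℕ) : ZMod a) = (k : ZMod a) + ((a/2:ℕ):ZMod a) := by
        push_cast; ring
      have hq : Qmat A (a/2 + (k+1)) = A ((k : ZMod a) + ((a/2:ℕ):ZMod a)) * Qmat A (a/2 + k) := by
        rw [show a/2 + (k+1) = (a/2 + k) + 1 from rfl]
        rw [Qmat, hcast]
      rw [hq, Qmat, transpose_mul, Finset.prod_range_succ]
      calc ((Qmat A k)ᵀ * (A (k:ZMod a))ᵀ) * (A ((k:ZMod a) + ((a/2:ℕ):ZMod a)) * Qmat A (a/2+k))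
          = (Qmat A k)ᵀ * ((A (k:ZMod a))ᵀ * A ((k:ZMod a) + ((a/2:ℕ):ZMod a))) * Qmat A (a/2+k) := by
            rw [mul_assoc, mul_assoc, mul_assoc]
        _ = (Qmat A k)ᵀ * ((c ((k:ZMod a)+1) * c (k:ZMod a)) • 1) * Qmat A (a/2+k) := by rw [rel2]
        _ = (c ((k:ZMod a)+1) * c (k:ZMod a)) • ((Qmat A k)ᵀ * Qmat A (a/2+k)) := by
            rw [Matrix.mul_smul, mul_one, Matrix.smul_mul]
        _ = ((∏ i ∈ Finset.range k, (c ((i:ZMod a)+1) * c (i:ZMod a))) *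
              (c ((k:ZMod a)+1) * c (k:ZMod a))) • Qmat A (a/2) := by
            rw [ih, smul_smul, mul_comm]
  have hprod : (∏ i ∈ Finset.range (a/2), (c ((i:ZMod a)+1) * c (i:ZMod a))) = ε := by
    have hfac : ∀ i ∈ Finset.range (a/2),
        c ((i:ZMod a)+1) * c (i:ZMod a) = if i+1 < a/2 then 1 else ε := by
      intro i hi
      rw [Finset.mem_range] at hi
      have hi1 : c (i:ZMod a) = 1 := by
        rw [hc]; simp only
        rw [ZMod.val_natCast_of_lt (by omega)]
        simp [hi]
      have hi2 : c ((i:ZMod a)+1) = if i+1 < a/2 then 1 else ε := by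
        rw [hc]; simp only
        rw [show ((i:ZMod a)+1) = ((i+1 : ℕ) : ZMod a) by push_cast; ring,
          ZMod.val_natCast_of_lt (by omega)]
      rw [hi1, hi2, mul_one]
    rw [Finset.prod_congr rfl hfac]
    rw [show a/2 = (a/2 - 1) + 1 by omega, Finset.prod_range_succ]
    rw [Finset.prod_eq_one (fun i hi => by
      rw [Finset.mem_range] at hi; rw [if_pos (by omega)])]
    rw [one_mul, if_neg (by omega)]
  have key : (Qmat A (a/2))ᵀ * Qmat A a = ε • Qmat A (a/2) := by
    have h2 := QtQ (a/2)
    rwa [ha2, hprod] at h2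
  -- deduce det (Q_a - ε • 1) = 0 using oddness of N
  have hBdet : (Qmat A a - ε • 1).det = 0 := by
    have hfact : (Qmat A (a/2))ᵀ * (Qmat A a - ε • 1) =
        ε • (Qmat A (a/2) - (Qmat A (a/2))ᵀ) := by
      rw [mul_sub, key, Matrix.mul_smul, mul_one, smul_sub]
    have h2 := congrArg Matrix.det hfact
    rw [Matrix.det_mul, Matrix.det_transpose, Matrix.det_smul, Fintype.card_fin,
      alt_det_zero hNodd, mul_zero] at h2
    exact (mul_eq_zero.mp h2).resolve_left (hdetQ (a/2))
  -- obtain an eigenvector of Q_a with eigenvalue ε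
  obtain ⟨v, hv0, hv⟩ := Matrix.exists_mulVec_eq_zero_iff.mpr hBdet
  have hBv : Qmat A a *ᵥ v = ε • v := by
    rw [Matrix.sub_mulVec, sub_eq_zero] at hv
    rw [hv, Matrix.smul_mulVec, Matrix.one_mulVec]
  -- build an eigenvector of M with eigenvalue lam
  set wb : ZMod a → Fin N → F := fun j => (lam⁻¹)^(j.val) • ((Qmat A j.val) *ᵥ v) with hwb
  have hstep : ∀ j : ZMod a, A (j - 1) *ᵥ wb (j - 1) = lam • wb j := by
    intro j
    by_cases hj : j = 0
    · subst hj
      have hm1 : (0 : ZMod a) - 1 = ((a-1:ℕ):ZMod a) := by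
        have h1 : ((a:ℕ):ZMod a) = 0 := ZMod.natCast_self a
        rw [Nat.cast_sub (by omega), h1]
        push_cast; ring
      have hval : ((a-1:ℕ):ZMod a).val = a - 1 := ZMod.val_natCast_of_lt (by omega)
      rw [hm1, hwb]
      simp only [hval, ZMod.val_zero]
      rw [Matrix.mulVec_smul]
      rw [Matrix.mulVec_mulVec]
      rw [show A ((a-1:ℕ):ZMod a) * Qmat A (a-1) = Qmat A ((a-1)+1) from rfl]
      rw [show (a-1)+1 = a by omega, hBv]
      rw [show (Qmat A 0) = 1 from rfl, Matrix.one_mulVec]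
      rw [smul_smul, pow_zero, one_smul, ← hlam,
        show lam ^ a = lam ^ (a-1) * lam by rw [← pow_succ, show (a-1)+1 = a by omega]]
      congr 1
      rw [← mul_assoc, ← mul_pow, inv_mul_cancel₀ hlamne, one_pow, one_mul]
    · obtain ⟨k, hk⟩ : ∃ k, j.val = k + 1 :=
        Nat.exists_eq_succ_of_ne_zero (by simpa [ZMod.val_eq_zero] using hj)
      have hklt : k < a := by have := j.val_lt; omega
      have hjk : j = ((k+1:ℕ):ZMod a) := by rw [← hk, ZMod.natCast_val, ZMod.cast_id]
      have hj1 : j - 1 = ((k:ℕ):ZMod a) := by rw [hjk]; push_cast; ring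
      have hval : ((k:ℕ):ZMod a).val = k := ZMod.val_natCast_of_lt hklt
      rw [hj1, hwb]
      simp only [hval, hk]
      rw [Matrix.mulVec_smul, Matrix.mulVec_mulVec]
      rw [show A ((k:ℕ):ZMod a) * Qmat A k = Qmat A (k+1) from rfl]
      rw [smul_smul]
      congr 1
      rw [pow_succ, mul_comm (lam⁻¹^k), ← mul_assoc, mul_inv_cancel₀ hlamne, one_mul]
  set w : ZMod a × Fin N → F := fun p => wb p.1 p.2 with hw
  have hMw : (lam • (1 : Matrix (ZMod a × Fin N) (ZMod a × Fin N) F) - blockCyclic A) *ᵥ w = 0 := by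
    ext ⟨j, x⟩
    rw [Matrix.sub_mulVec, Pi.sub_apply, Pi.zero_apply, sub_eq_zero]
    have h1 : ((lam • (1 : Matrix (ZMod a × Fin N) (ZMod a × Fin N) F)) *ᵥ w) (j, x)
        = lam * wb j x := by
      rw [Matrix.smul_mulVec, Matrix.one_mulVec]; rfl
    have h2 : (blockCyclic A *ᵥ w) (j, x) = (A (j-1) *ᵥ wb (j-1)) x := by
      rw [Matrix.mulVec, dotProduct]
      rw [Fintype.sum_prod_type]
      have hiff : ∀ q1 : ZMod a, (j = q1 + 1) ↔ (q1 = j - 1) := by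
        intro q1; rw [eq_sub_iff_add_eq, eq_comm]
      simp only [blockCyclic, Matrix.of_apply, hiff, ite_mul, zero_mul,
        Finset.sum_ite_eq, Finset.mem_univ, if_true, Finset.sum_ite_irrel,
        Finset.sum_const_zero]
      rw [Finset.sum_ite_eq' Finset.univ (j - 1)]
      simp only [Finset.mem_univ, if_true]
      rfl
    rw [h1, h2, hstep j]
    rfl
  have hw0 : w ≠ 0 := by
    obtain ⟨x, hx⟩ := Function.ne_iff.mp hv0
    intro hcon
    apply hx
    have := congrFun hcon ((0 : ZMod a), x)
    simpa [hw, hwb, ZMod.val_zero, Qmat, Matrix.one_mulVec] using this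
  exact Matrix.exists_mulVec_eq_zero_iff.mp ⟨w, hw0, hMw⟩
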